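/- Let f be analytic on the open unit disk 𝔻 ⊂ ℂ with |f(z)| ≤ 1 for all z ∈ 𝔻, and write f(z) = Σ_{n=0}^∞ a_n z^n with a = |a₀|. Let p ∈ (0,2]. Then for every z ∈ 𝔻 with |z| = r ≤ R_p := p/(√(4p+1) + p + 1), one has |f(z)|^p + Σ_{n=1}^∞ |a_n| r^n + (1/(1+a) + r/(1−r)) · Σ_{n=1}^∞ |a_n|² r^{2n} ≤ 1. -/

import Mathlib

lemma core_poly (a r : ℝ) (ha0 : 0 ≤ a) (ha1 : a ≤ 1) (hr0 : 0 ≤ r) (hr3 : 3*r ≤ 1) :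
    (1+a*r)^2 * ((1-r)*(1+r) + (1-a)*r*(1-r) + (1-a^2)*r^2) ≤ (1-r)*(1+r)^3 := by
  nlinarith [mul_nonneg (mul_nonneg (mul_nonneg (sub_nonneg.2 ha1) hr0) (by linarith : (0:ℝ) ≤ 1 - 3*r)) (sq_nonneg (1+r)),
    mul_nonneg (mul_nonneg (mul_nonneg (sub_nonneg.2 ha1) (sub_nonneg.2 ha1)) hr0) (by positivity : (0:ℝ) ≤ 2*r + r^3),
    mul_nonneg (mul_nonneg (mul_nonneg (sub_nonneg.2 ha1) (by nlinarith : (0:ℝ) ≤ 1 - a^2)) hr0) (by positivity : (0:ℝ) ≤ 3*r^2),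
    mul_nonneg (mul_nonneg (mul_nonneg (sub_nonneg.2 ha1) (by nlinarith [sq_nonneg a, mul_nonneg ha0 ha0] : (0:ℝ) ≤ 1 - a^3)) hr0) (by positivity : (0:ℝ) ≤ r^3)]

lemma rp_bounds (p r : ℝ) (hp0 : 0 < p) (hr0 : 0 ≤ r)
    (hr : r ≤ p / (Real.sqrt (4 * p + 1) + p + 1)) :
    2*r*(1+r) ≤ p*(1-r)^2 ∧ r < 1 := by
  set s := Real.sqrt (4*p+1) with hs
  have hs0 : 0 ≤ s := Real.sqrt_nonneg _
  have hs2 : s^2 = 4*p+1 := Real.sq_sqrt (by linarith)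
  have hden : 0 < s + p + 1 := by linarith
  have h1 : r * (s + p + 1) ≤ p := (le_div_iff₀ hden).mp hr
  have hr1 : r < 1 := by nlinarith
  have h2 : r * s ≤ p - r*p - r := by nlinarith
  have h3 : (r*s)^2 ≤ (p - r*p - r)^2 := by
    have h4 : 0 ≤ p - r*p - r := le_trans (mul_nonneg hr0 hs0) h2
    nlinarith [mul_nonneg hr0 hs0]
  have h5 : r^2*(4*p+1) ≤ (p - r*p - r)^2 := by nlinarith
  constructor
  · nlinarith [mul_pos hp0 (by linarith : (0:ℝ) < 1 - r), sq_nonneg (p*(1-r) - 2*r), mul_nonneg (mul_nonneg hp0.le hr0) (by linarith : (0:ℝ) ≤ 1 - r)]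
  · exact hr1
lemma rpow_bound (t T q : ℝ) (ht0 : 0 ≤ t) (htT : t ≤ T) (hT1 : T ≤ 1)
    (hq0 : 0 < q) (hq2 : q ≤ 2) : t ^ q ≤ 1 - q/2 + q/2 * T^2 := by
  have hT0 : 0 ≤ T := le_trans ht0 htT
  have h1 : t ^ q ≤ T ^ q := Real.rpow_le_rpow ht0 htT hq0.le
  have h2 : T ^ q = (T^2) ^ (q/2) := by
    rw [← Real.rpow_natCast T 2, ← Real.rpow_mul hT0]
    congr 1; push_cast; ring
  have h3 : (T^2) ^ (q/2) * (1:ℝ) ^ (1 - q/2) ≤ (q/2) * T^2 + (1 - q/2) * 1 :=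
    Real.geom_mean_le_arith_mean2_weighted (by linarith) (by linarith) (by positivity)
      zero_le_one (by ring)
  calc t ^ q ≤ (T^2) ^ (q/2) := by rw [← h2]; exact h1
    _ ≤ 1 - q/2 + q/2 * T^2 := by
        rw [Real.one_rpow, mul_one] at h3; linarith

set_option maxHeartbeats 2000000 in
lemma key_ineq (a r p : ℝ) (ha0 : 0 ≤ a) (ha1 : a ≤ 1) (hr0 : 0 ≤ r) (hr3 : 3*r ≤ 1)
    (hp : 2*r*(1+r) ≤ p*(1-r)^2) :
    (1-a^2)*r/(1-r) + (1/(1+a) + r/(1-r)) * ((1-a^2)^2*r^2/(1-r^2)) ≤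
      p/2 * (1 - ((a+r)/(1+a*r))^2) := by
  have h1r : (0:ℝ) < 1 - r := by linarith
  have h1r2 : (0:ℝ) < 1 - r^2 := by nlinarith
  have h1a : (0:ℝ) < 1 + a := by linarith
  have har : (0:ℝ) < 1 + a*r := by nlinarith
  have ha2 : (0:ℝ) ≤ 1 - a^2 := by nlinarith
  have hcore := core_poly a r ha0 ha1 hr0 hr3
  have hT : 1 - ((a+r)/(1+a*r))^2 = (1-a^2)*(1-r^2)/(1+a*r)^2 := by
    field_simp; ring
  rw [hT]
  have hDpos : (0:ℝ) < 2*(1-r)*(1-r^2)*(1+a)*(1+a*r)^2 := by positivity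
  rw [← mul_le_mul_iff_of_pos_right hDpos]
  have e1 : ((1-a^2)*r/(1-r) + (1/(1+a) + r/(1-r)) * ((1-a^2)^2*r^2/(1-r^2))) *
      (2*(1-r)*(1-r^2)*(1+a)*(1+a*r)^2) =
      2*(1-a^2)*(1+a)*r*(1-r^2)*(1+a*r)^2 + 2*(1-a^2)^2*r^2*(1+a*r)^3 := by
    field_simp; ring
  have e2 : (p/2 * ((1-a^2)*(1-r^2)/(1+a*r)^2)) * (2*(1-r)*(1-r^2)*(1+a)*(1+a*r)^2) =
      p*(1-a^2)*(1+a)*(1-r)*(1-r^2)^2 := by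
    field_simp
  rw [e1, e2]
  nlinarith [mul_nonneg (mul_nonneg (mul_nonneg ha2 h1a.le) hr0)
      (by nlinarith : (0:ℝ) ≤ (1-r)*(1+r)^3 - (1+a*r)^2 * ((1-r)*(1+r) + (1-a)*r*(1-r) + (1-a^2)*r^2)),
    mul_nonneg (by nlinarith : (0:ℝ) ≤ p*(1-r)^2 - 2*r*(1+r))
      (mul_nonneg (mul_nonneg (mul_nonneg ha2 h1a.le) h1r.le) (sq_nonneg (1+r)))]
lemma mob_real (A s t x : ℝ) (hA0 : 0 ≤ A) (hA : A ≤ 1) (ht0 : 0 ≤ t) (hts : t ≤ s)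
    (hs : s ≤ 1) (hx : -(A*t) ≤ x) :
    (A^2 + t^2 - 2*x)*(1+A*s)^2 ≤ (A+s)^2*(1 - 2*x + A^2*t^2) := by
  have hs0 : (0:ℝ) ≤ s := le_trans ht0 hts
  nlinarith [mul_nonneg (mul_nonneg (by nlinarith : (0:ℝ) ≤ 1 - A^2) (by linarith : (0:ℝ) ≤ s - t))
      (by nlinarith [mul_nonneg (mul_nonneg hA0 hs0) ht0, mul_nonneg (mul_nonneg hA0 hA0) ht0,
        mul_nonneg (mul_nonneg hA0 hA0) hs0, mul_nonneg hA0 hs0] :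
        (0:ℝ) ≤ (1+A^2+2*A*s)*t + (2*A+s+A^2*s)),
    mul_nonneg (mul_nonneg (by nlinarith : (0:ℝ) ≤ 1 - A^2) (by linarith : (0:ℝ) ≤ x + A*t))
      (by nlinarith [mul_nonneg hs0 hs0] : (0:ℝ) ≤ 1 - s^2)]

lemma mobius_norm_le (b w : ℂ) (s : ℝ) (hb : ‖b‖ < 1) (hw0 : ‖w‖ ≤ s) (hs : s ≤ 1) :
    ‖(b - w)/(1 - (starRingEnd ℂ) b * w)‖ ≤ (‖b‖ + s)/(1 + ‖b‖ * s) := by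
  have hA0 : (0:ℝ) ≤ ‖b‖ := norm_nonneg b
  have ht0 : (0:ℝ) ≤ ‖w‖ := norm_nonneg w
  have hs0 : (0:ℝ) ≤ s := le_trans ht0 hw0
  have hbw : ‖(starRingEnd ℂ) b * w‖ < 1 := by
    rw [norm_mul, RCLike.norm_conj]
    calc ‖b‖ * ‖w‖ ≤ ‖b‖ * 1 := mul_le_mul_of_nonneg_left (le_trans hw0 hs) hA0
      _ = ‖b‖ := mul_one _
      _ < 1 := hb
  have hden : (0:ℝ) < ‖1 - (starRingEnd ℂ) b * w‖ := by
    have := norm_sub_norm_le (1 : ℂ) ((starRingEnd ℂ) b * w)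
    simp only [norm_one] at this
    linarith
  have hden2 : (0:ℝ) < 1 + ‖b‖ * s := by positivity
  rw [norm_div, div_le_div_iff₀ hden hden2]
  have nb : ‖b‖^2 = b.re^2 + b.im^2 := by
    rw [Complex.sq_norm, Complex.normSq_apply]; ring
  have nw : ‖w‖^2 = w.re^2 + w.im^2 := by
    rw [Complex.sq_norm, Complex.normSq_apply]; ring
  have hx : -(‖b‖ * ‖w‖) ≤ ((starRingEnd ℂ) b * w).re := by
    have h1 : |((starRingEnd ℂ) b * w).re| ≤ ‖(starRingEnd ℂ) b * w‖ :=
      Complex.abs_re_le_norm _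
    rw [norm_mul, RCLike.norm_conj] at h1
    cases' abs_le.mp h1 with h2 h3
    linarith
  have e1 : ‖b - w‖^2 = ‖b‖^2 + ‖w‖^2 - 2*((starRingEnd ℂ) b * w).re := by
    rw [Complex.sq_norm, Complex.normSq_apply, nb, nw]
    simp [Complex.sub_re, Complex.sub_im, Complex.mul_re, Complex.conj_re, Complex.conj_im]
    ring
  have e2 : ‖1 - (starRingEnd ℂ) b * w‖^2 =
      1 - 2*((starRingEnd ℂ) b * w).re + ‖b‖^2*‖w‖^2 := by
    rw [Complex.sq_norm, Complex.normSq_apply, nb, nw]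
    simp [Complex.sub_re, Complex.sub_im, Complex.mul_re, Complex.mul_im,
      Complex.conj_re, Complex.conj_im]
    ring
  have key := mob_real ‖b‖ s ‖w‖ (((starRingEnd ℂ) b * w).re) hA0 hb.le ht0 hw0 hs hx
  have hsq : (‖b - w‖ * (1 + ‖b‖ * s))^2 ≤ ((‖b‖ + s) * ‖1 - (starRingEnd ℂ) b * w‖)^2 := by
    calc (‖b - w‖ * (1 + ‖b‖ * s))^2 = ‖b - w‖^2 * (1 + ‖b‖*s)^2 := by ring
      _ = (‖b‖^2 + ‖w‖^2 - 2*((starRingEnd ℂ) b * w).re) * (1 + ‖b‖*s)^2 := by rw [e1]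
      _ ≤ (‖b‖+s)^2 * (1 - 2*((starRingEnd ℂ) b * w).re + ‖b‖^2*‖w‖^2) := key
      _ = ((‖b‖ + s) * ‖1 - (starRingEnd ℂ) b * w‖)^2 := by rw [mul_pow, e2]
  exact (pow_le_pow_iff_left₀ (by positivity) (by positivity) (two_ne_zero)).mp hsq
noncomputable def mySeries (d : ℕ → ℂ) : FormalMultilinearSeries ℂ ℂ ℂ :=
  fun n => ContinuousMultilinearMap.mkPiRing ℂ (Fin n) (d n)

lemma mySeries_apply (d : ℕ → ℂ) (n : ℕ) (y : ℂ) :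
    (mySeries d n) (fun _ => y) = d n * y ^ n := by
  simp [mySeries, ContinuousMultilinearMap.mkPiRing_apply, Finset.prod_const, smul_eq_mul]
  ring

lemma mySeries_norm (d : ℕ → ℂ) (n : ℕ) : ‖mySeries d n‖ = ‖d n‖ :=
  ContinuousMultilinearMap.norm_mkPiRing _

lemma hasFPS (d : ℕ → ℂ) (F : ℂ → ℂ)
    (hd : ∀ ρ : ℝ, 0 ≤ ρ → ρ < 1 → Summable fun j => ‖d j‖ * ρ ^ j)
    (hF : ∀ w ∈ Metric.ball (0:ℂ) 1, HasSum (fun m => d m * w ^ m) (F w)) :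
    HasFPowerSeriesOnBall F (mySeries d) 0 1 := by
  constructor
  · apply ENNReal.le_of_forall_nnreal_lt
    intro ρ hρ
    have hρ1 : (ρ:ℝ) < 1 := by exact_mod_cast hρ
    apply FormalMultilinearSeries.le_radius_of_summable
    have := hd ρ ρ.coe_nonneg hρ1
    simpa only [mySeries_norm] using this
  · exact one_pos
  · intro y hy
    have hy' : y ∈ Metric.ball (0:ℂ) 1 := by
      rw [EMetric.mem_ball, edist_zero_right] at hy
      rw [Metric.mem_ball, dist_zero_right]
      exact_mod_cast (ENNReal.coe_lt_coe.mp hy : ‖y‖₊ < (1:NNReal))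
    have := hF y hy'
    simp only [zero_add]
    convert this using 1
    · rfl
    funext n
    exact mySeries_apply d n y
lemma one_sub_ne (x : ℂ) (h : ‖x‖ < 1) : (1:ℂ) - x ≠ 0 := by
  intro h0
  rw [sub_eq_zero] at h0
  rw [← h0] at h
  simp at h

lemma norm_one_sub_conj_mul_self (b : ℂ) (hb : ‖b‖ < 1) :
    ‖(1:ℂ) - (starRingEnd ℂ) b * b‖ = 1 - ‖b‖^2 := by
  have : (starRingEnd ℂ) b * b = ((Complex.normSq b : ℝ) : ℂ) := by
    rw [mul_comm, Complex.mul_conj]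
  rw [this]
  have : (1:ℂ) - ((Complex.normSq b : ℝ) : ℂ) = (((1 - Complex.normSq b : ℝ)) : ℂ) := by
    push_cast; ring
  rw [this, Complex.norm_real]
  rw [Real.norm_eq_abs, abs_of_nonneg]
  · rw [Complex.normSq_eq_norm_sq]
  · rw [Complex.normSq_eq_norm_sq]
    nlinarith [norm_nonneg b]

lemma schwarz_pick_val (u : ℂ → ℂ) (hu : DifferentiableOn ℂ u (Metric.ball 0 1))
    (hlt : ∀ w ∈ Metric.ball (0:ℂ) 1, ‖u w‖ < 1)
    (z : ℂ) (hz : z ∈ Metric.ball (0:ℂ) 1) :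
    ‖u z‖ ≤ (‖u 0‖ + ‖z‖)/(1 + ‖u 0‖*‖z‖) := by
  have h0 : (0:ℂ) ∈ Metric.ball (0:ℂ) 1 := by simp
  set b := u 0 with hbdef
  have hb : ‖b‖ < 1 := hlt 0 h0
  set g : ℂ → ℂ := fun z => (b - u z) * ((1:ℂ) - (starRingEnd ℂ) b * u z)⁻¹ with hgdef
  have hden : ∀ w ∈ Metric.ball (0:ℂ) 1, ((1:ℂ) - (starRingEnd ℂ) b * u w) ≠ 0 := by
    intro w hw
    apply one_sub_ne
    rw [norm_mul, RCLike.norm_conj]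
    calc ‖b‖ * ‖u w‖ ≤ ‖b‖ * 1 := mul_le_mul_of_nonneg_left (hlt w hw).le (norm_nonneg b)
      _ = ‖b‖ := mul_one _
      _ < 1 := hb
  have hgd : DifferentiableOn ℂ g (Metric.ball 0 1) := by
    apply DifferentiableOn.mul
    · exact (differentiableOn_const b).sub hu
    · exact DifferentiableOn.inv ((differentiableOn_const 1).sub (hu.const_mul _)) hden
  have hg0 : g 0 = 0 := by simp [hgdef, hbdef]
  have hgb : ∀ w ∈ Metric.ball (0:ℂ) 1, ‖g w‖ < 1 := by
    intro w hw
    have h1 : ‖g w‖ ≤ (‖b‖ + ‖u w‖)/(1 + ‖b‖ * ‖u w‖) := by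
      have := mobius_norm_le b (u w) ‖u w‖ hb le_rfl (hlt w hw).le
      rwa [div_eq_mul_inv] at this
    apply lt_of_le_of_lt h1
    rw [div_lt_one (by positivity)]
    nlinarith [hlt w hw, norm_nonneg (u w), norm_nonneg b]
  have hmaps : Set.MapsTo g (Metric.ball 0 1) (Metric.ball (g 0) 1) := by
    intro w hw
    rw [hg0, Metric.mem_ball, dist_zero_right]
    exact hgb w hw
  have hschwarz := Complex.dist_le_div_mul_dist_of_mapsTo_ball hgd (hmaps.mono_right Metric.ball_subset_closedBall) hz
  rw [hg0, dist_zero_right, dist_zero_right, div_self (one_ne_zero), one_mul] at hschwarz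
  -- invert
  have hz1 : ‖z‖ < 1 := by rwa [Metric.mem_ball, dist_zero_right] at hz
  have hne2 : ((1:ℂ) - (starRingEnd ℂ) b * g z) ≠ 0 := by
    apply one_sub_ne
    rw [norm_mul, RCLike.norm_conj]
    calc ‖b‖ * ‖g z‖ ≤ ‖b‖ * 1 := mul_le_mul_of_nonneg_left (hgb z hz).le (norm_nonneg b)
      _ = ‖b‖ := mul_one _
      _ < 1 := hb
  have hinv : u z = (b - g z)/((1:ℂ) - (starRingEnd ℂ) b * g z) := by
    rw [eq_div_iff hne2, hgdef]
    have hd := hden z hz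
    have hd' : 1 - u z * (starRingEnd ℂ) b ≠ 0 := by rw [mul_comm]; exact hd
    field_simp
    ring
  rw [hinv]
  exact mobius_norm_le b (g z) ‖z‖ hb hschwarz hz1.le

lemma schwarz_pick_deriv (u : ℂ → ℂ) (hu : DifferentiableOn ℂ u (Metric.ball 0 1))
    (hlt : ∀ w ∈ Metric.ball (0:ℂ) 1, ‖u w‖ < 1) :
    ‖deriv u 0‖ ≤ 1 - ‖u 0‖^2 := by
  have h0 : (0:ℂ) ∈ Metric.ball (0:ℂ) 1 := by simp
  set b := u 0 with hbdef
  have hb : ‖b‖ < 1 := hlt 0 h0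
  set g : ℂ → ℂ := fun z => (b - u z) * ((1:ℂ) - (starRingEnd ℂ) b * u z)⁻¹ with hgdef
  have hden : ∀ w ∈ Metric.ball (0:ℂ) 1, ((1:ℂ) - (starRingEnd ℂ) b * u w) ≠ 0 := by
    intro w hw
    apply one_sub_ne
    rw [norm_mul, RCLike.norm_conj]
    calc ‖b‖ * ‖u w‖ ≤ ‖b‖ * 1 := mul_le_mul_of_nonneg_left (hlt w hw).le (norm_nonneg b)
      _ = ‖b‖ := mul_one _
      _ < 1 := hb
  have hgd : DifferentiableOn ℂ g (Metric.ball 0 1) := by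
    apply DifferentiableOn.mul
    · exact (differentiableOn_const b).sub hu
    · exact DifferentiableOn.inv ((differentiableOn_const 1).sub (hu.const_mul _)) hden
  have hg0 : g 0 = 0 := by simp [hgdef, hbdef]
  have hgb : ∀ w ∈ Metric.ball (0:ℂ) 1, ‖g w‖ < 1 := by
    intro w hw
    have h1 : ‖g w‖ ≤ (‖b‖ + ‖u w‖)/(1 + ‖b‖ * ‖u w‖) := by
      have := mobius_norm_le b (u w) ‖u w‖ hb le_rfl (hlt w hw).le
      rwa [div_eq_mul_inv] at this
    apply lt_of_le_of_lt h1
    rw [div_lt_one (by positivity)]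
    nlinarith [hlt w hw, norm_nonneg (u w), norm_nonneg b]
  have hmaps : Set.MapsTo g (Metric.ball 0 1) (Metric.ball (g 0) 1) := by
    intro w hw
    rw [hg0, Metric.mem_ball, dist_zero_right]
    exact hgb w hw
  have hschwarz := Complex.norm_deriv_le_div_of_mapsTo_ball hgd (hmaps.mono_right Metric.ball_subset_closedBall) one_pos
  rw [div_self (one_ne_zero)] at hschwarz
  -- compute deriv g 0
  have hu0 : HasDerivAt u (deriv u 0) 0 :=
    (hu.differentiableAt (Metric.isOpen_ball.mem_nhds h0)).hasDerivAt
  have hnum : HasDerivAt (fun z => b - u z) (-(deriv u 0)) 0 := hu0.const_sub b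
  have hden0 : ((1:ℂ) - (starRingEnd ℂ) b * u 0) ≠ 0 := hden 0 h0
  have hdd : HasDerivAt (fun z => (1:ℂ) - (starRingEnd ℂ) b * u z)
      (-((starRingEnd ℂ) b * deriv u 0)) 0 := (hu0.const_mul ((starRingEnd ℂ) b)).const_sub 1
  have hinv : HasDerivAt (fun z => ((1:ℂ) - (starRingEnd ℂ) b * u z)⁻¹)
      (-(-((starRingEnd ℂ) b * deriv u 0)) / ((1:ℂ) - (starRingEnd ℂ) b * u 0)^2) 0 :=
    hdd.inv hden0
  have hg' : HasDerivAt g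
      ((-(deriv u 0)) * ((1:ℂ) - (starRingEnd ℂ) b * u 0)⁻¹ +
        (b - u 0) * (-(-((starRingEnd ℂ) b * deriv u 0)) / ((1:ℂ) - (starRingEnd ℂ) b * u 0)^2))
      0 := hnum.mul hinv
  have hsub : b - u 0 = 0 := by rw [hbdef]; ring
  rw [hsub, zero_mul, add_zero] at hg'
  have hderg : deriv g 0 = (-(deriv u 0)) * ((1:ℂ) - (starRingEnd ℂ) b * b)⁻¹ := by
    rw [hg'.deriv, ← hbdef]
  rw [hderg] at hschwarz
  rw [norm_mul, norm_neg, norm_inv, norm_one_sub_conj_mul_self b hb] at hschwarz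
  have hpos : (0:ℝ) < 1 - ‖b‖^2 := by nlinarith [norm_nonneg b]
  rw [← div_eq_mul_inv, div_le_one hpos] at hschwarz
  exact hschwarz
lemma summ_norm (f : ℂ → ℂ) (c : ℕ → ℂ)
    (hsum : ∀ z ∈ Metric.ball (0 : ℂ) 1, HasSum (fun n : ℕ => c n * z ^ n) (f z))
    (ρ : ℝ) (hρ0 : 0 ≤ ρ) (hρ1 : ρ < 1) : Summable fun j => ‖c j‖ * ρ ^ j := by
  have hmem : ((ρ:ℂ)) ∈ Metric.ball (0:ℂ) 1 := by
    rw [Metric.mem_ball, dist_zero_right, Complex.norm_real, Real.norm_eq_abs,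
      abs_of_nonneg hρ0]
    exact hρ1
  have h1 : Summable fun j => c j * (ρ:ℂ)^j := (hsum _ hmem).summable
  have h2 : Summable fun j => ‖c j * (ρ:ℂ)^j‖ := summable_norm_iff.mpr h1
  convert h2 using 2 with j
  rw [norm_mul, norm_pow, Complex.norm_real, Real.norm_eq_abs, abs_of_nonneg hρ0]

lemma f_zero (f : ℂ → ℂ) (c : ℕ → ℂ)
    (hsum : ∀ z ∈ Metric.ball (0 : ℂ) 1, HasSum (fun n : ℕ => c n * z ^ n) (f z)) :
    f 0 = c 0 := by
  have h0 : (0:ℂ) ∈ Metric.ball (0:ℂ) 1 := by simp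
  have h1 := hsum 0 h0
  have h2 : HasSum (fun n : ℕ => c n * (0:ℂ) ^ n) (c 0 * (0:ℂ)^0) :=
    hasSum_single 0 (fun b hb => by simp [zero_pow hb])
  have := h1.unique h2
  simpa using this

lemma coeff_bound (f : ℂ → ℂ) (c : ℕ → ℂ)
    (hsum : ∀ z ∈ Metric.ball (0 : ℂ) 1, HasSum (fun n : ℕ => c n * z ^ n) (f z))
    (hlt : ∀ z ∈ Metric.ball (0:ℂ) 1, ‖f z‖ < 1)
    (n : ℕ) (hn : 1 ≤ n) : ‖c n‖ ≤ 1 - ‖c 0‖^2 := by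
  have hn0 : (n:ℕ) ≠ 0 := by omega
  have hnC : ((n:ℂ)) ≠ 0 := Nat.cast_ne_zero.mpr hn0
  have hnR : ((n:ℝ)) ≠ 0 := Nat.cast_ne_zero.mpr hn0
  set ω : ℂ := Complex.exp (((2 * Real.pi / n : ℝ) : ℂ) * Complex.I) with hωdef
  have hω_abs : ‖ω‖ = 1 := by
    rw [hωdef, Complex.norm_exp_ofReal_mul_I]
  have hωn : ω ^ n = 1 := by
    rw [hωdef, ← Complex.exp_nat_mul]
    have : (n:ℂ) * (((2 * Real.pi / n : ℝ) : ℂ) * Complex.I) = 2 * (Real.pi:ℂ) * Complex.I := by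
      push_cast
      field_simp
    rw [this, Complex.exp_two_pi_mul_I]
  have hω_pow_ne : ∀ j : ℕ, ¬ (n ∣ j) → ω ^ j ≠ 1 := by
    intro j hj h1
    rw [hωdef, ← Complex.exp_nat_mul] at h1
    obtain ⟨m, hm⟩ := Complex.exp_eq_one_iff.mp h1
    have hm2 : ((j * (2 * Real.pi / n) : ℝ) : ℂ) * Complex.I =
        ((m * (2 * Real.pi) : ℝ) : ℂ) * Complex.I := by
      push_cast
      push_cast at hm
      linear_combination hm
    have hm3 : ((j * (2 * Real.pi / n) : ℝ) : ℂ) = ((m * (2 * Real.pi) : ℝ) : ℂ) :=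
      mul_right_cancel₀ Complex.I_ne_zero hm2
    have hm4 : (j : ℝ) * (2 * Real.pi / n) = m * (2 * Real.pi) := Complex.ofReal_inj.mp hm3
    have hπ : Real.pi ≠ 0 := ne_of_gt Real.pi_pos
    have hm5 : (j : ℝ) = n * m := by
      field_simp at hm4
      rcases lt_trichotomy ((j:ℝ)) ((n:ℝ)*m) with hlt' | heq' | hgt'
      · exfalso; nlinarith [Real.pi_pos, mul_pos (sub_pos.mpr hlt') Real.pi_pos]
      · exact heq'
      · exfalso; nlinarith [Real.pi_pos, mul_pos (sub_pos.mpr hgt') Real.pi_pos]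
    have hm6 : (j : ℤ) = n * m := by exact_mod_cast hm5
    exact hj (Int.natCast_dvd_natCast.mp ⟨m, hm6⟩)
  set g : ℂ → ℂ := fun z => (n:ℂ)⁻¹ * ∑ k ∈ Finset.range n, f (ω^k * z) with hgdef
  have hmem_rot : ∀ (k : ℕ) (z : ℂ), z ∈ Metric.ball (0:ℂ) 1 → ω^k * z ∈ Metric.ball (0:ℂ) 1 := by
    intro k z hz
    rw [Metric.mem_ball, dist_zero_right] at hz ⊢
    rw [norm_mul, norm_pow, hω_abs, one_pow, one_mul]
    exact hz
  have hsum_if : ∀ z ∈ Metric.ball (0:ℂ) 1,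
      HasSum (fun j => (if n ∣ j then c j else 0) * z^j) (g z) := by
    intro z hz
    have hk : ∀ k ∈ Finset.range n, HasSum (fun j => c j * (ω^k * z)^j) (f (ω^k * z)) :=
      fun k _ => hsum _ (hmem_rot k z hz)
    have h1 : HasSum (fun j => ∑ k ∈ Finset.range n, c j * (ω^k * z)^j)
        (∑ k ∈ Finset.range n, f (ω^k * z)) := hasSum_sum hk
    have h2 := h1.mul_left ((n:ℂ)⁻¹)
    convert h2 using 2 with j
    · rfl
    have e1 : ∀ k, c j * (ω^k * z)^j = c j * z^j * ((ω^j)^k) := by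
      intro k
      rw [mul_pow, ← pow_mul, ← pow_mul']
      ring
    simp_rw [e1]
    rw [← Finset.mul_sum]
    by_cases hdvd : n ∣ j
    · rw [if_pos hdvd]
      have hωj : ω ^ j = 1 := by
        obtain ⟨m, rfl⟩ := hdvd
        rw [pow_mul, hωn, one_pow]
      rw [hωj]
      simp only [one_pow, Finset.sum_const, Finset.card_range, nsmul_eq_mul]
      field_simp
    · rw [if_neg hdvd]
      rw [geom_sum_eq (hω_pow_ne j hdvd) n]
      have : (ω^j)^n = 1 := by rw [← pow_mul, mul_comm, pow_mul, hωn, one_pow]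
      rw [this]
      simp
  have hglt : ∀ z ∈ Metric.ball (0:ℂ) 1, ‖g z‖ < 1 := by
    intro z hz
    have h1 : ‖∑ k ∈ Finset.range n, f (ω^k * z)‖ ≤ ∑ k ∈ Finset.range n, ‖f (ω^k * z)‖ :=
      norm_sum_le _ _
    have h2 : ∑ k ∈ Finset.range n, ‖f (ω^k * z)‖ < ∑ k ∈ Finset.range n, (1:ℝ) := by
      apply Finset.sum_lt_sum_of_nonempty
      · exact Finset.nonempty_range_iff.mpr hn0
      · intro k _
        exact hlt _ (hmem_rot k z hz)
    rw [Finset.sum_const, Finset.card_range, nsmul_eq_mul, mul_one] at h2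
    rw [hgdef]
    simp only [norm_mul, norm_inv, Complex.norm_natCast]
    have hnpos : (0:ℝ) < n := by positivity
    calc (↑n)⁻¹ * ‖∑ k ∈ Finset.range n, f (ω^k * z)‖ < (↑n)⁻¹ * n := by
          apply mul_lt_mul_of_pos_left (lt_of_le_of_lt h1 h2) (by positivity)
      _ = 1 := inv_mul_cancel₀ hnR
  have hinj : Function.Injective (fun m : ℕ => n * m) := fun a b h => by
    simpa [Nat.mul_right_inj hn0] using h
  have hd2 : ∀ ρ : ℝ, 0 ≤ ρ → ρ < 1 → Summable fun m => ‖c (n*m)‖ * ρ ^ m := by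
    intro ρ hρ0 hρ1
    set σ : ℝ := ρ ^ ((n:ℝ)⁻¹) with hσdef
    have hσ0 : 0 ≤ σ := Real.rpow_nonneg hρ0 _
    have hσ1 : σ < 1 := by
      rcases eq_or_lt_of_le hρ0 with h | h
      · rw [hσdef, ← h, Real.zero_rpow (by positivity)]; norm_num
      · exact Real.rpow_lt_one hρ0 hρ1 (by positivity)
    have hσn : σ ^ n = ρ := by
      rw [hσdef, ← Real.rpow_natCast (ρ ^ ((n:ℝ)⁻¹)) n, ← Real.rpow_mul hρ0,
        inv_mul_cancel₀ hnR, Real.rpow_one]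
    have hbase := summ_norm f c hsum σ hσ0 hσ1
    have := hbase.comp_injective hinj
    convert this using 2 with m
    · rfl
    simp only [Function.comp_apply]
    rw [← hσn, ← pow_mul]
  have H1 : ∀ ζ ∈ Metric.ball (0:ℂ) 1, HasSum (fun m => c (n*m) * (ζ^n)^m) (g ζ) := by
    intro ζ hζ
    have hvan : ∀ j ∉ Set.range (fun m : ℕ => n * m),
        (if n ∣ j then c j else 0) * ζ^j = 0 := by
      intro j hj
      have : ¬ n ∣ j := by
        intro ⟨m, hm⟩
        exact hj ⟨m, hm.symm⟩
      rw [if_neg this, zero_mul]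
    have h2 := (hinj.hasSum_iff hvan).mpr (hsum_if ζ hζ)
    convert h2 using 2 with m
    simp only [Function.comp_apply]
    rw [if_pos ⟨m, rfl⟩, ← pow_mul]
  set h : ℂ → ℂ := fun w => ∑' m, c (n*m) * w^m with hhdef
  have hFh : ∀ w ∈ Metric.ball (0:ℂ) 1, HasSum (fun m => c (n*m) * w^m) (h w) := by
    intro w hw
    rw [Metric.mem_ball, dist_zero_right] at hw
    have hsummable : Summable fun m => c (n*m) * w^m := by
      apply Summable.of_norm
      have := hd2 ‖w‖ (norm_nonneg w) hw
      convert this using 2 with m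
      rw [norm_mul, norm_pow]
    exact hsummable.hasSum
  have hroot : ∀ w ∈ Metric.ball (0:ℂ) 1, ∃ ζ ∈ Metric.ball (0:ℂ) 1, ζ^n = w := by
    intro w hw
    rw [Metric.mem_ball, dist_zero_right] at hw
    by_cases hw0 : w = 0
    · exact ⟨0, by simp, by rw [zero_pow hn0, hw0]⟩
    · refine ⟨w ^ ((n:ℂ)⁻¹), ?_, Complex.cpow_nat_inv_pow w hn0⟩
      rw [Metric.mem_ball, dist_zero_right,
        Complex.norm_cpow_of_ne_zero hw0]
      have hre : ((n:ℂ)⁻¹).re = (n:ℝ)⁻¹ := by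
        rw [show ((n:ℂ))⁻¹ = (((n:ℝ)⁻¹ : ℝ) : ℂ) by push_cast; ring, Complex.ofReal_re]
      have him : ((n:ℂ)⁻¹).im = 0 := by
        rw [show ((n:ℂ))⁻¹ = (((n:ℝ)⁻¹ : ℝ) : ℂ) by push_cast; ring, Complex.ofReal_im]
      rw [hre, him, mul_zero, Real.exp_zero, div_one]
      exact Real.rpow_lt_one (norm_nonneg w) hw (by positivity)
  have hval : ∀ w ∈ Metric.ball (0:ℂ) 1, ‖h w‖ < 1 := by
    intro w hw
    obtain ⟨ζ, hζ, hζn⟩ := hroot w hw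
    have h1 := H1 ζ hζ
    rw [hζn] at h1
    rw [(hFh w hw).unique h1]
    exact hglt ζ hζ
  have hseries : HasFPowerSeriesOnBall h (mySeries (fun m => c (n*m))) 0 1 :=
    hasFPS _ h hd2 hFh
  have hdiffh : DifferentiableOn ℂ h (Metric.ball (0:ℂ) 1) := by
    have := hseries.differentiableOn
    rwa [← ENNReal.coe_one, Metric.emetric_ball_nnreal, NNReal.coe_one] at this
  have hderiv : deriv h 0 = c n := by
    have h1 : HasFPowerSeriesAt h (mySeries (fun m => c (n*m))) 0 := ⟨1, hseries⟩
    rw [h1.deriv]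
    show (mySeries (fun m => c (n*m)) 1) 1 = c n
    have := mySeries_apply (fun m => c (n*m)) 1 1
    simpa using this
  have hh0 : h 0 = c 0 := by
    have h0mem : (0:ℂ) ∈ Metric.ball (0:ℂ) 1 := by simp
    have h1 := H1 0 h0mem
    rw [zero_pow hn0] at h1
    have h2 := (hFh 0 h0mem).unique h1
    rw [h2, hgdef]
    simp only []
    have : ∀ k ∈ Finset.range n, f (ω^k * 0) = f 0 := by intro k _; rw [mul_zero]
    rw [Finset.sum_congr rfl this, Finset.sum_const, Finset.card_range, nsmul_eq_mul,
      f_zero f c hsum, ← mul_assoc, inv_mul_cancel₀ hnC, one_mul]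
  have := schwarz_pick_deriv h hdiffh hval
  rw [hderiv, hh0] at this
  exact this
lemma const_coeff (f : ℂ → ℂ) (c : ℕ → ℂ)
    (hf : DifferentiableOn ℂ f (Metric.ball (0 : ℂ) 1))
    (hsum : ∀ z ∈ Metric.ball (0 : ℂ) 1, HasSum (fun n : ℕ => c n * z ^ n) (f z))
    (hb : ∀ z ∈ Metric.ball (0 : ℂ) 1, ‖f z‖ ≤ 1)
    (hex : ∃ z0 ∈ Metric.ball (0:ℂ) 1, 1 ≤ ‖f z0‖)
    (n : ℕ) (hn : 1 ≤ n) : c n = 0 := by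
  obtain ⟨z0, hz0, hz01⟩ := hex
  have hmax : IsMaxOn (norm ∘ f) (Metric.ball (0:ℂ) 1) z0 := by
    intro z hz
    simp only [Function.comp_apply, Set.mem_setOf_eq]
    exact le_trans (hb z hz) hz01
  have heq : Set.EqOn f (Function.const ℂ (f z0)) (Metric.ball (0:ℂ) 1) :=
    Complex.eqOn_of_isPreconnected_of_isMaxOn_norm
      (convex_ball (0:ℂ) 1).isPreconnected Metric.isOpen_ball hf hz0 hmax
  have hp : HasFPowerSeriesOnBall f (mySeries c) 0 1 :=
    hasFPS c f (summ_norm f c hsum) hsum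
  have hq0 : HasFPowerSeriesAt (fun _ : ℂ => f z0)
      (constFormalMultilinearSeries ℂ ℂ (f z0)) 0 := hasFPowerSeriesAt_const
  have hev : (fun _ : ℂ => f z0) =ᶠ[nhds (0:ℂ)] f := by
    apply Filter.eventually_of_mem (Metric.isOpen_ball.mem_nhds (Metric.mem_ball_self one_pos))
    intro z hz
    exact (heq hz).symm
  have hq : HasFPowerSeriesAt f (constFormalMultilinearSeries ℂ ℂ (f z0)) 0 := hq0.congr hev
  have hpq : mySeries c = constFormalMultilinearSeries ℂ ℂ (f z0) :=
    hp.hasFPowerSeriesAt.eq_formalMultilinearSeries hq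
  have happ := congrFun hpq n
  have h1 : (mySeries c n) (fun _ => (1:ℂ)) = c n := by
    have := mySeries_apply c n 1
    simpa using this
  have h2 : (constFormalMultilinearSeries ℂ ℂ (f z0) n) (fun _ => (1:ℂ)) = 0 := by
    rw [constFormalMultilinearSeries_apply_of_nonzero (by omega : n ≠ 0)]
    rfl
  rw [← h1, happ, h2]


/-- Lemma 2 of Liu–Ponnusamy: if `f` is analytic on the unit disk with `|f| ≤ 1`,
Taylor expansion `f(z) = Σ aₙ zⁿ`, `a = |a₀|`, and `p ∈ (0,2]`, then for `|z| = r`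
with `r ≤ R_p = p/(√(4p+1)+p+1)`,
`|f(z)|^p + Σ_{n≥1} |aₙ| rⁿ + (1/(1+a) + r/(1-r)) Σ_{n≥1} |aₙ|² r^{2n} ≤ 1`. -/
theorem stmt_12 (f : ℂ → ℂ) (c : ℕ → ℂ)
    (hf : DifferentiableOn ℂ f (Metric.ball (0 : ℂ) 1))
    (hsum : ∀ z ∈ Metric.ball (0 : ℂ) 1, HasSum (fun n : ℕ => c n * z ^ n) (f z))
    (hb : ∀ z ∈ Metric.ball (0 : ℂ) 1, ‖f z‖ ≤ 1)
    (p : ℝ) (hp0 : 0 < p) (hp2 : p ≤ 2)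
    (r : ℝ) (hr0 : 0 ≤ r) (hr : r ≤ p / (Real.sqrt (4 * p + 1) + p + 1))
    (z : ℂ) (hz : ‖z‖ = r) :
    Summable (fun n : ℕ => ‖c (n + 1)‖ * r ^ (n + 1)) ∧
    Summable (fun n : ℕ => ‖c (n + 1)‖ ^ 2 * r ^ (2 * (n + 1))) ∧
    ‖f z‖ ^ p + (∑' n : ℕ, ‖c (n + 1)‖ * r ^ (n + 1)) +
      (1 / (1 + ‖c 0‖) + r / (1 - r)) *
        ∑' n : ℕ, ‖c (n + 1)‖ ^ 2 * r ^ (2 * (n + 1)) ≤ 1 := by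
  obtain ⟨hp1, hr1⟩ := rp_bounds p r hp0 hr0 hr
  have hr3 : 3*r ≤ 1 := by nlinarith
  have hzball : z ∈ Metric.ball (0:ℂ) 1 := by
    rw [Metric.mem_ball, dist_zero_right, hz]; linarith
  have hfz0 : f 0 = c 0 := f_zero f c hsum
  have ha0 : (0:ℝ) ≤ ‖c 0‖ := norm_nonneg _
  have ha1 : ‖c 0‖ ≤ 1 := by rw [← hfz0]; exact hb 0 (by simp)
  have h1r : (0:ℝ) < 1 - r := by linarith
  by_cases hex : ∃ z0 ∈ Metric.ball (0:ℂ) 1, 1 ≤ ‖f z0‖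
  · -- constant case
    have hc0 : ∀ n : ℕ, 1 ≤ n → c n = 0 := const_coeff f c hf hsum hb hex
    have e1 : (fun n : ℕ => ‖c (n+1)‖ * r^(n+1)) = fun _ => (0:ℝ) := by
      funext n; rw [hc0 (n+1) (by omega)]; simp
    have e2 : (fun n : ℕ => ‖c (n+1)‖^2 * r^(2*(n+1))) = fun _ => (0:ℝ) := by
      funext n; rw [hc0 (n+1) (by omega)]; simp
    refine ⟨by rw [e1]; exact summable_zero, by rw [e2]; exact summable_zero, ?_⟩
    rw [e1, e2, tsum_zero, add_zero, mul_zero, add_zero]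
    exact Real.rpow_le_one (norm_nonneg _) (hb z hzball) hp0.le
  · push_neg at hex
    have hlt : ∀ w ∈ Metric.ball (0:ℂ) 1, ‖f w‖ < 1 := hex
    have hcn : ∀ n : ℕ, 1 ≤ n → ‖c n‖ ≤ 1 - ‖c 0‖^2 := coeff_bound f c hsum hlt
    set a : ℝ := ‖c 0‖ with hadef
    have hgeo1 : Summable (fun n : ℕ => (1-a^2) * r^(n+1)) := by
      have h := (summable_geometric_of_lt_one hr0 hr1).mul_left ((1-a^2)*r)
      convert h using 2 with n
      · rfl
      rw [pow_succ]; ring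
    have hr2 : r^2 < 1 := by nlinarith
    have hr20 : 0 ≤ r^2 := sq_nonneg r
    have hgeo2 : Summable (fun n : ℕ => (1-a^2)^2 * (r^2)^(n+1)) := by
      have h := (summable_geometric_of_lt_one hr20 hr2).mul_left ((1-a^2)^2*r^2)
      convert h using 2 with n
      · rfl
      rw [pow_succ]; ring
    have hterm1 : ∀ n : ℕ, ‖c (n+1)‖ * r^(n+1) ≤ (1-a^2) * r^(n+1) := fun n =>
      mul_le_mul_of_nonneg_right (hcn (n+1) (by omega)) (by positivity)
    have hterm2 : ∀ n : ℕ, ‖c (n+1)‖^2 * r^(2*(n+1)) ≤ (1-a^2)^2 * (r^2)^(n+1) := by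
      intro n
      rw [show 2*(n+1) = (n+1)*2 by ring, pow_mul, show (r^2)^(n+1) = (r^(n+1))^2 by
        rw [← pow_mul, ← pow_mul, mul_comm]]
      have h1 : ‖c (n+1)‖^2 ≤ (1-a^2)^2 := by
        apply pow_le_pow_left₀ (norm_nonneg _) (hcn (n+1) (by omega))
      exact mul_le_mul_of_nonneg_right h1 (by positivity)
    have hs1 : Summable (fun n : ℕ => ‖c (n+1)‖ * r^(n+1)) :=
      Summable.of_nonneg_of_le (fun n => by positivity) hterm1 hgeo1
    have hs2 : Summable (fun n : ℕ => ‖c (n+1)‖^2 * r^(2*(n+1))) :=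
      Summable.of_nonneg_of_le (fun n => by positivity) hterm2 hgeo2
    refine ⟨hs1, hs2, ?_⟩
    have htsum1 : ∑' n : ℕ, ‖c (n+1)‖ * r^(n+1) ≤ (1-a^2)*r/(1-r) := by
      calc ∑' n : ℕ, ‖c (n+1)‖ * r^(n+1) ≤ ∑' n : ℕ, (1-a^2) * r^(n+1) :=
            Summable.tsum_le_tsum hterm1 hs1 hgeo1
        _ = (1-a^2)*r/(1-r) := by
            have e : (fun n : ℕ => (1-a^2) * r^(n+1)) = fun n => ((1-a^2)*r) * r^n := by
              funext n; rw [pow_succ]; ring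
            rw [e, tsum_mul_left, tsum_geometric_of_lt_one hr0 hr1]
            field_simp
    have htsum2 : ∑' n : ℕ, ‖c (n+1)‖^2 * r^(2*(n+1)) ≤ (1-a^2)^2*r^2/(1-r^2) := by
      calc ∑' n : ℕ, ‖c (n+1)‖^2 * r^(2*(n+1)) ≤ ∑' n : ℕ, (1-a^2)^2 * (r^2)^(n+1) :=
            Summable.tsum_le_tsum hterm2 hs2 hgeo2
        _ = (1-a^2)^2*r^2/(1-r^2) := by
            have e : (fun n : ℕ => (1-a^2)^2 * (r^2)^(n+1)) =
                fun n => ((1-a^2)^2*r^2) * (r^2)^n := by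
              funext n; rw [pow_succ]; ring
            rw [e, tsum_mul_left, tsum_geometric_of_lt_one hr20 hr2]
            field_simp
    have hfzb : ‖f z‖ ≤ (a + r)/(1 + a*r) := by
      have := schwarz_pick_val f hf hlt z hzball
      rwa [hfz0, hz] at this
    have hT1 : (a + r)/(1 + a*r) ≤ 1 := by
      rw [div_le_one (by nlinarith)]
      nlinarith
    have hrpow : ‖f z‖ ^ p ≤ 1 - p/2 + p/2 * ((a + r)/(1 + a*r))^2 :=
      rpow_bound _ _ p (norm_nonneg _) hfzb hT1 hp0 hp2
    have hkey := key_ineq a r p ha0 ha1 hr0 hr3 hp1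
    have hcoef : (0:ℝ) ≤ 1/(1+a) + r/(1-r) :=
      add_nonneg (by positivity) (div_nonneg hr0 h1r.le)
    have hmul : (1/(1+a) + r/(1-r)) * ∑' n : ℕ, ‖c (n+1)‖^2 * r^(2*(n+1)) ≤
        (1/(1+a) + r/(1-r)) * ((1-a^2)^2*r^2/(1-r^2)) :=
      mul_le_mul_of_nonneg_left htsum2 hcoef
    linarith [hrpow, htsum1, hmul, hkey]
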